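/- For all n ≥ 0 and k ≥ 1, the higher-order secant numbers satisfy the three-term recurrence S(n+1, k) = S(n, k−1) + (k+1)^2 · S(n, k+1), with S(n,0) = S_n (the classical secant numbers) for all n ≥ 0. -/

import Mathlib

open Real Finset

/-- Tangent numbers: tan t = Σ Tₙ tⁿ/n!. -/
noncomputable def tangentNumber (n : ℕ) : ℝ := iteratedDeriv n Real.tan 0

/-- Secant numbers: sec t = Σ Sₙ tⁿ/n!. -/
noncomputable def secantNumber (n : ℕ) : ℝ := iteratedDeriv n (fun t : ℝ => 1 / Real.cos t) 0

/-- Higher-order tangent numbers: tanᵏ t / k! = Σ T(n,k) tⁿ/n!. -/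
noncomputable def T (n k : ℕ) : ℝ :=
  iteratedDeriv n (fun t : ℝ => Real.tan t ^ k) 0 / (Nat.factorial k : ℝ)

/-- Higher-order secant numbers: sec t · tanᵏ t / k! = Σ S(n,k) tⁿ/n!. -/
noncomputable def S (n k : ℕ) : ℝ :=
  iteratedDeriv n (fun t : ℝ => Real.tan t ^ k / Real.cos t) 0 / (Nat.factorial k : ℝ)

/-- Higher-order arctangent numbers: arctanᵏ t / k! = Σ T*(n,k) tⁿ/n!. -/
noncomputable def Tstar (n k : ℕ) : ℝ :=
  iteratedDeriv n (fun t : ℝ => Real.arctan t ^ k) 0 / (Nat.factorial k : ℝ)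

/-- Binomial coefficient with integer lower index (0 if lower index is negative). -/
noncomputable def chooseZ (a : ℕ) (b : ℤ) : ℝ :=
  if 0 ≤ b then (a.choose b.toNat : ℝ) else 0

section aux

local notation "g" => fun (j : ℕ) => fun t : ℝ => Real.tan t ^ j / Real.cos t

private lemma aux_s_open : IsOpen {x : ℝ | Real.cos x ≠ 0} :=
  isOpen_compl_iff.mpr (isClosed_eq Real.continuous_cos continuous_const)

private lemma aux_contDiffOn (j : ℕ) :
    ContDiffOn ℝ (⊤ : ℕ∞) (g j) {x : ℝ | Real.cos x ≠ 0} := by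
  apply ContDiffOn.div
  · exact ContDiffOn.pow (fun x hx => (Real.contDiffAt_tan.2 hx).contDiffWithinAt) j
  · exact Real.contDiff_cos.contDiffOn
  · exact fun x hx => hx

private lemma aux_hasDerivAt (m : ℕ) {x : ℝ} (hx : Real.cos x ≠ 0) :
    HasDerivAt (g (m + 1))
      (((m : ℝ) + 1) * (g m x) + ((m : ℝ) + 2) * (g (m + 2) x)) x := by
  have htan := Real.hasDerivAt_tan hx
  have hpow := htan.pow (m + 1)
  have hcos := Real.hasDerivAt_cos x
  have hinv := hcos.inv hx
  have h := hpow.mul hinv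
  have hfun : (Real.tan ^ (m + 1) * (Real.cos)⁻¹ : ℝ → ℝ) = g (m + 1) := by
    funext t; exact (div_eq_mul_inv _ _).symm
  rw [hfun] at h
  have h1 : (1 : ℝ) / Real.cos x ^ 2 = Real.tan x ^ 2 + 1 := by
    rw [Real.tan_eq_sin_div_cos, div_pow, div_add' _ _ _ (pow_ne_zero 2 hx),
      one_mul, Real.sin_sq_add_cos_sq]
  have h2 : Real.sin x / Real.cos x ^ 2 = Real.tan x / Real.cos x := by
    rw [Real.tan_eq_sin_div_cos, div_div, ← sq]
  refine h.congr_deriv ?_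
  simp only [Nat.add_sub_cancel, Nat.cast_add, Nat.cast_one, neg_neg, Pi.pow_apply, Pi.inv_apply]
  rw [h1, h2]
  field_simp
  ring

private lemma aux_lin (n : ℕ) (a b : ℝ) (j l : ℕ) :
    iteratedDeriv n (fun t : ℝ => a * g j t + b * g l t) 0 =
      a * iteratedDeriv n (g j) 0 + b * iteratedDeriv n (g l) 0 := by
  have h0 : (0 : ℝ) ∈ {x : ℝ | Real.cos x ≠ 0} := by
    simp [Real.cos_zero]
  have hs := aux_s_open
  have hu : UniqueDiffOn ℝ {x : ℝ | Real.cos x ≠ 0} := hs.uniqueDiffOn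
  have key : ∀ (f : ℝ → ℝ), iteratedDerivWithin n f {x : ℝ | Real.cos x ≠ 0} 0 =
      iteratedDeriv n f 0 := by
    intro f
    rw [iteratedDerivWithin_eq_iteratedFDerivWithin, iteratedDeriv_eq_iteratedFDeriv,
      iteratedFDerivWithin_of_isOpen n hs h0]
  rw [← key, ← key (g j), ← key (g l)]
  have hj : ContDiffOn ℝ (n : ℕ∞) (fun t : ℝ => a * g j t) {x : ℝ | Real.cos x ≠ 0} :=
    ((aux_contDiffOn j).const_smul a).of_le (by exact_mod_cast le_top)
  have hl : ContDiffOn ℝ (n : ℕ∞) (fun t : ℝ => b * g l t) {x : ℝ | Real.cos x ≠ 0} :=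
    ((aux_contDiffOn l).const_smul b).of_le (by exact_mod_cast le_top)
  have := iteratedDerivWithin_add (𝕜 := ℝ) h0 hu (hj 0 h0) (hl 0 h0)
  rw [show (fun t : ℝ => a * g j t) + (fun t : ℝ => b * g l t)
      = (fun t : ℝ => a * g j t + b * g l t) from rfl] at this
  rw [this,
    iteratedDerivWithin_const_mul h0 hu a ((aux_contDiffOn j).of_le (by exact_mod_cast le_top) 0 h0),
    iteratedDerivWithin_const_mul h0 hu b ((aux_contDiffOn l).of_le (by exact_mod_cast le_top) 0 h0)]

end aux

theorem stmt9 :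
    (∀ n k : ℕ, 1 ≤ k →
      S (n + 1) k = S n (k - 1) + ((k : ℝ) + 1) ^ 2 * S n (k + 1)) ∧
    (∀ n : ℕ, S n 0 = secantNumber n) := by
  constructor
  · intro n k hk
    obtain ⟨m, rfl⟩ := Nat.exists_eq_add_of_le hk
    set sset : Set ℝ := {x : ℝ | Real.cos x ≠ 0}
    have h0 : (0 : ℝ) ∈ sset := by simp [sset, Real.cos_zero]
    have hnbhd : sset ∈ nhds (0 : ℝ) := aux_s_open.mem_nhds h0
    have hev : deriv (fun t : ℝ => Real.tan t ^ (1 + m) / Real.cos t) =ᶠ[nhds (0:ℝ)]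
        (fun t : ℝ => ((m : ℝ) + 1) * (Real.tan t ^ m / Real.cos t)
          + ((m : ℝ) + 2) * (Real.tan t ^ (m + 2) / Real.cos t)) := by
      filter_upwards [hnbhd] with x hx
      have := aux_hasDerivAt m hx
      rw [show 1 + m = m + 1 from by ring]
      exact this.deriv
    have main : iteratedDeriv (n + 1) (fun t : ℝ => Real.tan t ^ (1 + m) / Real.cos t) 0
        = ((m : ℝ) + 1) * iteratedDeriv n (fun t : ℝ => Real.tan t ^ m / Real.cos t) 0
          + ((m : ℝ) + 2) * iteratedDeriv n (fun t : ℝ => Real.tan t ^ (m + 2) / Real.cos t) 0 := by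
      rw [iteratedDeriv_succ']
      rw [Filter.EventuallyEq.iteratedDeriv_eq n hev]
      exact aux_lin n _ _ m (m + 2)
    have hfac1 : (Nat.factorial (1 + m) : ℝ) ≠ 0 := Nat.cast_ne_zero.mpr (Nat.factorial_ne_zero _)
    have hfacm : (Nat.factorial m : ℝ) ≠ 0 := Nat.cast_ne_zero.mpr (Nat.factorial_ne_zero _)
    have hfac2 : (Nat.factorial (1 + m + 1) : ℝ) ≠ 0 :=
      Nat.cast_ne_zero.mpr (Nat.factorial_ne_zero _)
    simp only [S, show 1 + m - 1 = m from by omega, show 1 + m + 1 = m + 2 from by omega]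
    rw [main]
    have e1 : (Nat.factorial (1 + m) : ℝ) = ((m : ℝ) + 1) * Nat.factorial m := by
      rw [show 1 + m = m + 1 from by ring, Nat.factorial_succ]; push_cast; ring
    have e2 : (Nat.factorial (m + 2) : ℝ) = ((m : ℝ) + 2) * Nat.factorial (m + 1) := by
      rw [show m + 2 = (m + 1) + 1 from rfl, Nat.factorial_succ]; push_cast; ring
    have e3 : (Nat.factorial (m + 1) : ℝ) = ((m : ℝ) + 1) * Nat.factorial m := by
      rw [Nat.factorial_succ]; push_cast; ring
    have hm1 : ((m : ℝ) + 1) ≠ 0 := by positivity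
    have hm2 : ((m : ℝ) + 2) ≠ 0 := by positivity
    rw [e1]
    have hfacm2 : (Nat.factorial (m + 2) : ℝ) ≠ 0 := Nat.cast_ne_zero.mpr (Nat.factorial_ne_zero _)
    push_cast
    rw [e2, e3] at hfacm2 ⊢
    field_simp
    ring
  · intro n
    simp only [S, secantNumber, pow_zero, Nat.factorial_zero, Nat.cast_one, div_one]
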